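/- For every C > 1 there exist constants K > 0 and δ ∈ (0, π) such that for all θ ∈ [−C, C] and all λ ∈ (0, δ]: |λ^{−θ}(1 − e^{iλ})^{θ} − e^{−iπθ/2}| ≤ Kλ, where (1 − e^{iλ})^{θ} denotes the principal-branch complex power exp(θ · Log(1 − e^{iλ})) and λ^{−θ} is the real power. -/

import Mathlib

/-- Lemma 5.2(a), first assertion: uniformly in `θ ∈ [-C, C]`,
`λ^{-θ} (1 - e^{iλ})^θ = e^{-iπθ/2} + O(λ)` as `λ → 0+`,
where the complex power is the principal branch. -/
theorem power_transfer_function_expansion (C : ℝ) (hC : 1 < C) :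
    ∃ K > 0, ∃ δ : ℝ, 0 < δ ∧ δ < Real.pi ∧
      ∀ θ ∈ Set.Icc (-C) C, ∀ l ∈ Set.Ioc (0 : ℝ) δ,
        ‖(((l ^ (-θ) : ℝ) : ℂ) *
            (1 - Complex.exp (Complex.I * (l : ℂ))) ^ (θ : ℂ) -
          Complex.exp (-Complex.I * (Real.pi : ℂ) * (θ : ℂ) / 2))‖ ≤ K * l := by
  have hC0 : (0:ℝ) < C := lt_trans one_pos hC
  refine ⟨2 * C, by positivity, 1 / C, by positivity,
    lt_trans (by rw [div_lt_one hC0]; exact hC) (by linarith [Real.pi_gt_three] : (1:ℝ) < Real.pi), ?_⟩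
  intro θ hθ l hl
  obtain ⟨hl0, hlδ⟩ := hl
  have hθC : |θ| ≤ C := abs_le.mpr ⟨hθ.1, hθ.2⟩
  have hlC : l * C ≤ 1 := by
    have : l * C ≤ (1/C) * C := by nlinarith
    rwa [one_div, inv_mul_cancel₀ (ne_of_gt hC0)] at this
  have hl1 : l ≤ 1 := by nlinarith
  set x : ℝ := l / 2 with hx
  have hx0 : 0 < x := by positivity
  have hx1 : x ≤ 1/2 := by simp only [hx]; linarith
  have hsin0 : 0 < Real.sin x := Real.sin_pos_of_pos_of_lt_pi hx0
    (lt_of_le_of_lt (by linarith) (by linarith [Real.pi_gt_three]))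
  set s : ℝ := 2 * Real.sin x with hs
  have hs0 : 0 < s := by positivity
  -- the key identity: 1 - e^{il} = exp(log s + ((l - π)/2) i)
  have hzexp : (1 : ℂ) - Complex.exp (Complex.I * (l : ℂ))
      = Complex.exp ((Real.log s : ℂ) + ((((l - Real.pi) / 2 : ℝ)) : ℂ) * Complex.I) := by
    rw [Complex.exp_add]
    rw [← Complex.ofReal_exp, Real.exp_log hs0]
    have hsplit : ((((l - Real.pi) / 2 : ℝ)) : ℂ) * Complex.I
        = (x : ℂ) * Complex.I + (((-(Real.pi/2) : ℝ)) : ℂ) * Complex.I := by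
      push_cast [hx]; ring
    rw [hsplit, Complex.exp_add]
    have hmI : Complex.exp ((((-(Real.pi/2) : ℝ)) : ℂ) * Complex.I) = -Complex.I := by
      rw [Complex.exp_mul_I, ← Complex.ofReal_cos, ← Complex.ofReal_sin]
      simp [Real.cos_pi_div_two, Real.sin_pi_div_two]
    rw [hmI]
    have hsx : (s : ℂ) = 2 * Complex.sin (x : ℂ) := by
      rw [hs]; push_cast [Complex.ofReal_sin]; ring
    rw [hsx, Complex.sin]
    have e1 : Complex.exp ((x:ℂ) * Complex.I) * Complex.exp ((x:ℂ) * Complex.I)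
        = Complex.exp (Complex.I * (l : ℂ)) := by
      rw [← Complex.exp_add]; congr 1; push_cast [hx]; ring
    have e2 : Complex.exp (-(x:ℂ) * Complex.I) * Complex.exp ((x:ℂ) * Complex.I) = 1 := by
      rw [← Complex.exp_add]; ring_nf; exact Complex.exp_zero
    have hI2 : Complex.I * Complex.I = -1 := Complex.I_mul_I
    linear_combination e1 - e2 + ((Complex.exp (-(x:ℂ) * Complex.I)
      - Complex.exp ((x:ℂ) * Complex.I)) * Complex.exp ((x:ℂ) * Complex.I)) * hI2

  have hzne : (1 : ℂ) - Complex.exp (Complex.I * (l : ℂ)) ≠ 0 := by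
    rw [hzexp]; exact Complex.exp_ne_zero _
  have hπ : (3:ℝ) < Real.pi := Real.pi_gt_three
  have hlog : Complex.log ((1 : ℂ) - Complex.exp (Complex.I * (l : ℂ)))
      = (Real.log s : ℂ) + ((((l - Real.pi) / 2 : ℝ)) : ℂ) * Complex.I := by
    rw [hzexp]
    refine Complex.log_exp ?_ ?_ <;> simp <;> nlinarith
  have hcpow : ((1 : ℂ) - Complex.exp (Complex.I * (l : ℂ))) ^ (θ : ℂ)
      = Complex.exp (((Real.log s : ℂ) + ((((l - Real.pi) / 2 : ℝ)) : ℂ) * Complex.I) * θ) := by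
    rw [Complex.cpow_def_of_ne_zero hzne, hlog]
  have hrpow : (((l ^ (-θ) : ℝ)) : ℂ) = Complex.exp ((Real.log l * (-θ) : ℝ) : ℂ) := by
    rw [Real.rpow_def_of_pos hl0, Complex.ofReal_exp]
  set w : ℂ := ((θ * (Real.log s - Real.log l) : ℝ) : ℂ) + ((θ * (l/2) : ℝ) : ℂ) * Complex.I
    with hw
  set B : ℂ := -Complex.I * (Real.pi : ℂ) * (θ : ℂ) / 2 with hB
  have hprod : (((l ^ (-θ) : ℝ)) : ℂ) * ((1 : ℂ) - Complex.exp (Complex.I * (l : ℂ))) ^ (θ : ℂ)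
      = Complex.exp (B + w) := by
    rw [hrpow, hcpow, ← Complex.exp_add]
    congr 1
    rw [hw, hB]
    push_cast
    ring
  -- bound on |log(s/l)|
  have hr0 : (0:ℝ) < s / l := by positivity
  have hsl : s < l := by
    have := Real.sin_lt hx0
    simp only [hs, hx] at *
    nlinarith
  have hr1 : s / l ≤ 1 := by
    rw [div_le_one hl0]; exact le_of_lt hsl
  have hcube : x - x ^ 3 / 4 < Real.sin x := lt_of_le_of_lt (by nlinarith [pow_pos hx0 3]) (Real.sin_gt_sub_cube hx0)
  have hrlow : 1 - x^2/4 ≤ s / l := by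
    rw [le_div_iff₀ hl0]
    have hlx : l = 2 * x := by rw [hx]; ring
    rw [hlx, hs]
    nlinarith
  have hr34 : (3:ℝ)/4 ≤ s / l := by nlinarith
  have hloginv : Real.log ((s/l)⁻¹) ≤ (s/l)⁻¹ - 1 :=
    Real.log_le_sub_one_of_pos (by positivity)
  have hinv : (s/l) * (s/l)⁻¹ = 1 := mul_inv_cancel₀ (ne_of_gt hr0)
  have hinvle : (s/l)⁻¹ - 1 ≤ x := by nlinarith
  have hlogabs : |Real.log (s/l)| ≤ l / 2 := by
    rw [Real.log_inv] at hloginv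
    have hlogle : Real.log (s/l) ≤ 0 := Real.log_nonpos (le_of_lt hr0) hr1
    rw [abs_le]
    constructor <;> simp only [hx] at * <;> linarith
  have hlogdiff : |Real.log s - Real.log l| ≤ l / 2 := by
    rw [← Real.log_div (ne_of_gt hs0) (ne_of_gt hl0)]
    exact hlogabs
  have habsw : ‖w‖ ≤ C * l := by
    have h1 : ‖w‖ ≤ |θ * (Real.log s - Real.log l)| + |θ * (l/2)| := by
      refine le_trans (norm_add_le _ _) ?_
      rw [norm_mul, Complex.norm_I, mul_one, Complex.norm_real, Complex.norm_real, Real.norm_eq_abs, Real.norm_eq_abs]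
    have h2 : |θ * (Real.log s - Real.log l)| ≤ C * (l/2) := by
      rw [abs_mul]; exact mul_le_mul hθC hlogdiff (abs_nonneg _) (le_of_lt hC0)
    have h3 : |θ * (l/2)| ≤ C * (l/2) := by
      rw [abs_mul, abs_of_pos (show (0:ℝ) < l/2 by positivity)]
      exact mul_le_mul_of_nonneg_right hθC (by positivity)
    linarith
  have habsw1 : ‖w‖ ≤ 1 := le_trans habsw (by nlinarith)
  have hBre : B.re = 0 := by simp [hB]
  calc ‖((((l ^ (-θ) : ℝ)) : ℂ) * ((1 : ℂ) - Complex.exp (Complex.I * (l : ℂ))) ^ (θ : ℂ)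
        - Complex.exp B)‖
      = ‖(Complex.exp B * (Complex.exp w - 1))‖ := by
        rw [hprod, Complex.exp_add, mul_sub, mul_one]
    _ = ‖(Complex.exp w - 1)‖ := by
        rw [norm_mul, Complex.norm_exp, hBre, Real.exp_zero, one_mul]
    _ ≤ 2 * ‖w‖ := Complex.norm_exp_sub_one_le habsw1
    _ ≤ 2 * (C * l) := by linarith
    _ = 2 * C * l := by ring
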